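/- Let π : {0,...,n} → ℤ be a path with π(0) = 0 and steps ±1, and define P_max(π)(k) = 2·max_{0≤a≤k} π(a) - π(k). Then P_max(π) is again a path starting at 0 with steps ±1, and it satisfies P_max(π)(k) ≥ 0 and P_max(π)(k) ≥ π(k) for all k. -/

import Mathlib

/-- A trajectory of length `n`: a path `π : {0,…,n} → ℤ` with `π 0 = 0` and all
steps equal to `+1` or `-1`. -/
def IsTraj (n : ℕ) (π : Fin (n + 1) → ℤ) : Prop :=
  π 0 = 0 ∧ ∀ k : Fin n, π k.succ - π k.castSucc = 1 ∨ π k.succ - π k.castSucc = -1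

/-- The dual Pitman transform `P_max(π)(k) = 2·max_{0 ≤ a ≤ k} π(a) - π(k)`. -/
def Pmax {n : ℕ} (π : Fin (n + 1) → ℤ) : Fin (n + 1) → ℤ :=
  fun k => 2 * (Finset.Iic k).sup' ⟨k, Finset.mem_Iic.2 le_rfl⟩ π - π k

private lemma Iic_succ_eq {n : ℕ} (k : Fin n) :
    Finset.Iic k.succ = insert k.succ (Finset.Iic k.castSucc) := by
  ext j
  simp only [Finset.mem_Iic, Finset.mem_insert]
  constructor
  · intro h
    rcases eq_or_lt_of_le h with h | h
    · exact Or.inl h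
    · exact Or.inr (Fin.le_castSucc_iff.2 h)
  · rintro (h | h)
    · exact h.le
    · exact (Fin.le_castSucc_iff.1 h).le

private lemma M_succ {n : ℕ} (π : Fin (n + 1) → ℤ) (k : Fin n) :
    (Finset.Iic k.succ).sup' ⟨k.succ, Finset.mem_Iic.2 le_rfl⟩ π
      = max (π k.succ)
        ((Finset.Iic k.castSucc).sup' ⟨k.castSucc, Finset.mem_Iic.2 le_rfl⟩ π) := by
  refine (Finset.sup'_congr _ (Iic_succ_eq k) (fun _ _ => rfl)).trans ?_
  exact Finset.sup'_insert (f := π) ⟨k.castSucc, Finset.mem_Iic.2 le_rfl⟩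

/-- **`P_max` produces nonnegative dominating trajectories.**
If `π` is a path starting at `0` with steps `±1`, then so is `P_max(π)`, and
moreover `P_max(π)(k) ≥ 0` and `P_max(π)(k) ≥ π(k)` for all `k`. -/
theorem pmax_isTraj_nonneg_dominates {n : ℕ} (π : Fin (n + 1) → ℤ) (hπ : IsTraj n π) :
    IsTraj n (Pmax π) ∧ ∀ k, 0 ≤ Pmax π k ∧ π k ≤ Pmax π k := by
  obtain ⟨h0, hstep⟩ := hπ
  have hMk : ∀ k : Fin (n + 1),
      π k ≤ (Finset.Iic k).sup' ⟨k, Finset.mem_Iic.2 le_rfl⟩ π :=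
    fun k => Finset.le_sup' π (Finset.mem_Iic.2 le_rfl)
  have hM0 : ∀ k : Fin (n + 1),
      (0 : ℤ) ≤ (Finset.Iic k).sup' ⟨k, Finset.mem_Iic.2 le_rfl⟩ π := by
    intro k
    calc (0 : ℤ) = π 0 := h0.symm
    _ ≤ _ := Finset.le_sup' π (Finset.mem_Iic.2 (Fin.zero_le k))
  refine ⟨⟨?_, ?_⟩, ?_⟩
  · simp only [Pmax]
    have : Finset.Iic (0 : Fin (n + 1)) = {0} := by
      ext j; simp [Finset.mem_Iic, Fin.le_zero_iff]
    have h00 : (Finset.Iic (0 : Fin (n + 1))).sup' ⟨0, Finset.mem_Iic.2 le_rfl⟩ π = π 0 :=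
      (Finset.sup'_congr _ this (fun _ _ => rfl)).trans (by simp)
    simp [h00, h0]
  · intro k
    have hM := M_succ π k
    simp only [Pmax, hM]
    rcases hstep k with h | h
    · rcases le_or_gt (π k.succ)
        ((Finset.Iic k.castSucc).sup' ⟨k.castSucc, Finset.mem_Iic.2 le_rfl⟩ π) with hc | hc
      · rw [max_eq_right hc]; right; linarith
      · rw [max_eq_left hc.le]
        have := hMk k.castSucc
        left; linarith
    · have : π k.succ ≤ (Finset.Iic k.castSucc).sup' ⟨k.castSucc, Finset.mem_Iic.2 le_rfl⟩ π := by
        have := hMk k.castSucc; linarith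
      rw [max_eq_right this]; left; linarith
  · intro k
    have h1 := hMk k
    have h2 := hM0 k
    simp only [Pmax]
    constructor <;> linarith
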